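/- Let m ≥ 2, n ≥ 2k and 3 ≤ k ≤ ⌊n/2⌋. If n = 2k, then |S^(k)_{m×n}| = (f_{2k−1}^(k−1))^{m−2}. If n > 2k, then |S^(k)_{m×n}| = f_{n−2k−1}^(k−1) · (f_{n−2k+1}^(k−1) + d_{n−2k+2}^(k)) · (f_{n−1}^(k−1))^{m−2}. -/

import Mathlib

/-- A binary string (list of booleans, `false` = 0, `true` = 1) avoids `0^k`
and `1^k`, i.e. it contains neither `k` consecutive 0's nor `k` consecutive 1's. -/
def Avoids (k : ℕ) (s : List Bool) : Prop :=
  ¬ (List.replicate k false <:+: s) ∧ ¬ (List.replicate k true <:+: s)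
/-- The `i`-th row (0-indexed) of an `m × n` binary matrix, read as a binary string. -/
def row {m n : ℕ} (A : Fin m → Fin n → Bool) (i : ℕ) : List Bool :=
  List.ofFn (fun j : Fin n => if h : i < m then A ⟨i, h⟩ j else false)
/-- The set `S^(k)_{m×n}`: binary `m × n` matrices whose first row is
`1^{k−1} 0 w 1 0^{k−1}` (with `0w1` of length `n−2k+2` avoiding `0^k` and `1^k`),
whose middle rows end with `0` and avoid `0^k` and `1^k`, and whose last row is
`1^k v 0^k` (with `v` of length `n−2k` avoiding `0^k` and `1^k`). -/
def SkSet (m n k : ℕ) : Set (Fin m → Fin n → Bool) :=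
  {A |
    (∃ v : List Bool, v.length = n - 2*k + 2 ∧ Avoids k v ∧
        v.head? = some false ∧ v.getLast? = some true ∧
        row A 0 = List.replicate (k-1) true ++ v ++ List.replicate (k-1) false) ∧
    (∀ i : ℕ, 1 ≤ i → i ≤ m - 2 → Avoids k (row A i) ∧ (row A i).getLast? = some false) ∧
    (∃ v : List Bool, v.length = n - 2*k ∧ Avoids k v ∧
        row A (m-1) = List.replicate k true ++ v ++ List.replicate k false)}
/-- The `k`-generalized Fibonacci numbers: `f_n^(k) = 2^n` for `0 ≤ n ≤ k−1`
and `f_n^(k) = f_{n−1}^(k) + … + f_{n−k}^(k)` for `n ≥ k`. -/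
def genFib (k : ℕ) (n : ℕ) : ℕ :=
  if n < k then 2 ^ n
  else ∑ j ∈ (Finset.Icc 1 k).attach, genFib k (n - j.1)
termination_by n
decreasing_by
  have hj := j.2
  simp only [Finset.mem_Icc] at hj
  omega
/-- The sequence `d_n^(k)`: `1` if `n ≡ 0 (mod k)`, `−1` if `n ≡ 1 (mod k)`,
and `0` otherwise. -/
def dseq (k n : ℕ) : ℤ :=
  if n % k = 0 then 1 else if n % k = 1 then -1 else 0

namespace SkP

open List

lemma avoids_iff {k : ℕ} {s : List Bool} :
    Avoids k s ↔ ∀ b : Bool, ¬ (List.replicate k b <:+: s) := by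
  constructor
  · rintro ⟨h0, h1⟩ b; cases b
    · exact h0
    · exact h1
  · intro h; exact ⟨h false, h true⟩

lemma avoids_of_length_lt {k : ℕ} {s : List Bool} (h : s.length < k) : Avoids k s := by
  rw [avoids_iff]
  intro b hb
  have := hb.length_le
  simp only [List.length_replicate] at this
  omega

lemma avoids_infix {k : ℕ} {s t : List Bool} (h : Avoids k s) (hts : t <:+: s) :
    Avoids k t := by
  rw [avoids_iff] at h ⊢
  exact fun b hb => h b (hb.trans hts)

lemma infix_map_not {k : ℕ} {s : List Bool} {b : Bool} :
    List.replicate k b <:+: s.map not ↔ List.replicate k (!b) <:+: s := by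
  constructor
  · intro h
    have h2 := h.map not
    simpa [List.map_replicate, List.map_map, Function.comp_def] using h2
  · intro h
    have h2 := h.map not
    simpa [List.map_replicate] using h2

lemma avoids_map_not {k : ℕ} {s : List Bool} :
    Avoids k (s.map not) ↔ Avoids k s := by
  simp only [avoids_iff]
  constructor
  · intro h b hb
    exact h (!b) (by rw [infix_map_not]; simpa using hb)
  · intro h b hb
    rw [infix_map_not] at hb
    exact h (!b) hb

lemma infix_append_split {α : Type*} {t u v : List α} (h : t <:+: u ++ v) :
    t <:+: u ∨ t <:+: v ∨
      ∃ t₁ t₂, t = t₁ ++ t₂ ∧ t₁ ≠ [] ∧ t₂ ≠ [] ∧ t₁ <:+ u ∧ t₂ <+: v := by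
  obtain ⟨a, c, hac⟩ := h
  rw [List.append_assoc] at hac
  rcases List.append_eq_append_iff.1 hac with ⟨a', ha', h2⟩ | ⟨c', hc', h2⟩
  · rcases List.append_eq_append_iff.1 h2 with ⟨w, hw1, hw2⟩ | ⟨w, hw1, hw2⟩
    · exact Or.inl (List.infix_iff_prefix_suffix.2 ⟨a', ⟨w, hw1.symm⟩, ⟨a, ha'.symm⟩⟩)
    · rcases eq_or_ne a' [] with rfl | ha'ne
      · refine Or.inr (Or.inl ?_)
        exact (show t <+: v from ⟨c, by rw [hw1]; simpa using hw2.symm⟩).isInfix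
      · rcases eq_or_ne w [] with rfl | hwne
        · refine Or.inl ?_
          have : t <:+ u := ⟨a, by rw [hw1]; simpa using ha'.symm⟩
          exact this.isInfix
        · exact Or.inr (Or.inr ⟨a', w, hw1, ha'ne, hwne, ⟨a, ha'.symm⟩, ⟨c, hw2.symm⟩⟩)
  · refine Or.inr (Or.inl ?_)
    exact ⟨c', c, by rw [h2, List.append_assoc]⟩

lemma getLast?_replicate_pos {α : Type*} {j : ℕ} (hj : 1 ≤ j) (b : α) :
    (List.replicate j b).getLast? = some b := by
  rw [List.getLast?_eq_head?_reverse, List.reverse_replicate, List.head?_replicate]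
  simp; omega

lemma avoids_append_replicate {k : ℕ} (hk : 3 ≤ k) {s : List Bool} {b : Bool} {j : ℕ}
    (hs : Avoids k s) (hend : s = [] ∨ s.getLast? = some (!b)) (hj : j ≤ k - 1) :
    Avoids k (s ++ List.replicate j b) := by
  rw [avoids_iff]
  intro c hc
  rcases infix_append_split hc with h | h | ⟨t₁, t₂, heq, h1ne, h2ne, h1, h2⟩
  · exact (avoids_iff.1 hs) c h
  · rw [List.infix_replicate_iff] at h
    have := h.1
    simp only [List.length_replicate] at this
    omega
  · have h1p : t₁ <+: List.replicate k c := ⟨t₂, heq.symm⟩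
    have h2s : t₂ <:+ List.replicate k c := ⟨t₁, heq.symm⟩
    rw [List.prefix_replicate_iff] at h1p
    rw [List.suffix_replicate_iff] at h2s
    rw [List.prefix_replicate_iff] at h2
    -- c = b from t₂
    have hcb : c = b := by
      have hmem : c ∈ t₂ := by
        rw [h2s.2]
        exact List.mem_replicate.2 ⟨by simpa using h2ne, rfl⟩
      have := h2.2 ▸ hmem
      exact List.eq_of_mem_replicate this
    subst hcb
    -- s ends with c
    have hlast : s.getLast? = some c := by
      obtain ⟨w, hw⟩ := h1
      have ht1 : t₁.getLast? = some c := by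
        rw [h1p.2]
        exact getLast?_replicate_pos (by simpa [Nat.one_le_iff_ne_zero, List.length_eq_zero_iff] using h1ne) c
      rw [← hw, List.getLast?_append_of_ne_nil _ h1ne, ht1]
    rcases hend with rfl | hend
    · obtain ⟨w, hw⟩ := h1
      exact h1ne (List.append_eq_nil_iff.1 hw).2
    · rw [hlast] at hend
      simp at hend

lemma exists_strip {k : ℕ} (hk : 3 ≤ k) {s : List Bool} {b : Bool}
    (hs : Avoids k s) (hl : s.getLast? = some b) :
    ∃ j s', 1 ≤ j ∧ j ≤ k - 1 ∧ s = s' ++ List.replicate j b ∧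
      (s' = [] ∨ s'.getLast? = some (!b)) ∧ Avoids k s' ∧ s'.length + j = s.length := by
  set p : Bool → Bool := fun x => x == b with hp
  set r := s.reverse with hr
  obtain ⟨L, hL⟩ : ∃ L, (r.takeWhile p).length = L := ⟨_, rfl⟩
  have htw : r.takeWhile p = List.replicate L b := by
    rw [← hL, List.eq_replicate_iff]
    exact ⟨rfl, fun x hx => by simpa [hp] using List.mem_takeWhile_imp hx⟩
  have hsplit : r.takeWhile p ++ r.dropWhile p = r :=
    List.takeWhile_append_dropWhile (p := p) (l := r)
  have hseq : s = (r.dropWhile p).reverse ++ List.replicate L b := by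
    conv_lhs => rw [← s.reverse_reverse, ← hr, ← hsplit]
    rw [List.reverse_append, htw, List.reverse_replicate]
  refine ⟨L, (r.dropWhile p).reverse, ?_, ?_, hseq, ?_, ?_, ?_⟩
  · -- 1 ≤ L
    have hhead : r.head? = some b := by rw [hr, List.head?_reverse]; exact hl
    cases hrc : r with
    | nil => simp [hrc] at hhead
    | cons x xs =>
      rw [hrc] at hhead
      simp only [List.head?_cons, Option.some_inj] at hhead
      have : r.takeWhile p = x :: xs.takeWhile p := by
        rw [hrc, List.takeWhile_cons, if_pos (by simp [hp, hhead])]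
      rw [← hL, this]
      simp
  · -- L ≤ k - 1
    by_contra hcon
    push_neg at hcon
    have hkle : k ≤ L := by omega
    have hsuf : List.replicate L b <:+ s := ⟨(r.dropWhile p).reverse, hseq.symm⟩
    have hik : List.replicate k b <:+ List.replicate L b := by
      rw [List.suffix_replicate_iff]
      simp [hkle]
    exact (avoids_iff.1 hs) b ((hik.trans hsuf).isInfix)
  · -- ends with !b or empty
    cases hdw : r.dropWhile p with
    | nil => left; simp [hdw]
    | cons x xs =>
      right
      have hx : p x = false := by
        have h0 := List.head?_dropWhile_not p r
        rw [hdw] at h0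
        simpa using h0
      have hx' : x ≠ b := by simpa [hp] using hx
      have hxb : x = !b := by
        cases b
        · cases x
          · exact absurd rfl hx'
          · rfl
        · cases x
          · rfl
          · exact absurd rfl hx'
      rw [List.getLast?_reverse]
      simp [hxb]
  · -- avoids
    exact avoids_infix hs (List.IsPrefix.isInfix ⟨List.replicate L b, hseq.symm⟩)
  · -- length
    conv_rhs => rw [hseq]
    simp

lemma replicate_ne_nil' {α : Type*} {j : ℕ} (hj : 1 ≤ j) (b : α) :
    List.replicate j b ≠ [] := by
  intro h
  have := congrArg List.length h
  simp at this
  omega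

/-- The family of sets of strings we count. -/
def SS (k n : ℕ) (hd : Option Bool) (b : Bool) : Set (List Bool) :=
  {s | s.length = n ∧ Avoids k s ∧ (∀ a ∈ hd, s.head? = some a) ∧
    (s = [] ∨ s.getLast? = some b)}

lemma SS_finite {k n : ℕ} {hd : Option Bool} {b : Bool} : (SS k n hd b).Finite :=
  (List.finite_length_eq Bool n).subset (fun _ hs => hs.1)

lemma ncard_biUnion {α β : Type*} (t : Finset β) (f : β → Set α)
    (hf : ∀ i ∈ t, (f i).Finite)
    (hd : ∀ i ∈ t, ∀ j ∈ t, i ≠ j → Disjoint (f i) (f j)) :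
    (⋃ i ∈ t, f i).ncard = ∑ i ∈ t, (f i).ncard := by
  classical
  induction t using Finset.induction_on with
  | empty => simp
  | insert a s ha ih =>
    rw [Finset.sum_insert ha, Finset.set_biUnion_insert]
    rw [Set.ncard_union_eq ?dis ?f1 ?f2]
    · rw [ih (fun i hi => hf i (Finset.mem_insert_of_mem hi))
        (fun i hi j hj hij => hd i (Finset.mem_insert_of_mem hi) j
          (Finset.mem_insert_of_mem hj) hij)]
    case dis =>
      rw [Set.disjoint_iUnion₂_right]
      intro i hi
      exact hd a (Finset.mem_insert_self a s) i (Finset.mem_insert_of_mem hi)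
        (fun h => ha (h ▸ hi))
    case f1 => exact hf a (Finset.mem_insert_self a s)
    case f2 =>
      exact Set.Finite.biUnion s.finite_toSet
        (fun i hi => hf i (Finset.mem_insert_of_mem hi))

lemma SS_decomp {k n : ℕ} {hd : Option Bool} {b : Bool} (hk : 3 ≤ k)
    (hn : k - 1 ≤ n) (hside : hd = some b → k ≤ n) :
    SS k n hd b =
      ⋃ j ∈ Finset.Icc 1 (k - 1), (fun s' => s' ++ List.replicate j b) '' SS k (n - j) hd (!b) := by
  ext s
  simp only [Set.mem_iUnion, Finset.mem_Icc, Set.mem_image, exists_prop]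
  constructor
  · rintro ⟨hlen, hav, hhd, hlast⟩
    have hne : s ≠ [] := by
      intro h
      subst h
      simp at hlen
      omega
    have hlast' : s.getLast? = some b := hlast.resolve_left hne
    obtain ⟨j, s', hj1, hjk, hseq, hend, hav', hlen'⟩ := exists_strip hk hav hlast'
    refine ⟨j, ⟨hj1, hjk⟩, s', ⟨?_, hav', ?_, hend⟩, hseq.symm⟩
    · omega
    · -- head condition on s'
      intro a ha
      have hsa : s.head? = some a := hhd a ha
      rcases eq_or_ne s' [] with rfl | hs'ne
      · exfalso
        have hsb : s.head? = some b := by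
          rw [hseq, List.nil_append, List.head?_replicate, if_neg (by omega)]
        rw [hsa] at hsb
        have hab : a = b := by injection hsb
        have hcase : hd = some b := by
          cases hd with
          | none => simp at ha
          | some c =>
            have h1 : c = a := by
              have : some c = some a := by simpa [Option.mem_def] using ha
              injection this
            rw [h1, hab]
        have hkn := hside hcase
        rw [hseq] at hlen
        simp at hlen
        omega
      · rw [hseq, List.head?_append_of_ne_nil _ hs'ne] at hsa
        exact hsa
  · rintro ⟨j, ⟨hj1, hjk⟩, s', ⟨hlen', hav', hhd', hend'⟩, rfl⟩
    refine ⟨?_, avoids_append_replicate hk hav' hend' hjk, ?_, Or.inr ?_⟩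
    · simp only [List.length_append, List.length_replicate, hlen']
      omega
    · intro a ha
      have hs'ne : s' ≠ [] := by
        intro h
        subst h
        have := hhd' a ha
        simp at this
      rw [List.head?_append_of_ne_nil _ hs'ne]
      exact hhd' a ha
    · rw [List.getLast?_append_of_ne_nil _ (replicate_ne_nil' hj1 b)]
      exact getLast?_replicate_pos hj1 b

lemma SS_card_rec {k n : ℕ} {hd : Option Bool} {b : Bool} (hk : 3 ≤ k)
    (hn : k - 1 ≤ n) (hside : hd = some b → k ≤ n) :
    (SS k n hd b).ncard = ∑ j ∈ Finset.Icc 1 (k - 1), (SS k (n - j) hd (!b)).ncard := by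
  rw [SS_decomp hk hn hside]
  rw [ncard_biUnion]
  · refine Finset.sum_congr rfl (fun j hj => ?_)
    apply Set.ncard_image_of_injective
    intro x y hxy
    exact List.append_cancel_right hxy
  · intro j hj
    exact (SS_finite.image _)
  · intro i hi j hj hij
    simp only [Finset.mem_Icc] at hi hj
    rw [Set.disjoint_left]
    rintro x ⟨s₁, hs₁, rfl⟩ ⟨s₂, hs₂, heq⟩
    have heq' : s₂ ++ List.replicate j b = s₁ ++ List.replicate i b := heq
    clear heq
    rcases Nat.lt_or_ge i j with hlt | hge
    · have h3 : s₂ ++ (List.replicate (j - i) b ++ List.replicate i b)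
          = s₁ ++ List.replicate i b := by
        rw [← List.replicate_add, show j - i + i = j by omega]
        exact heq'
      rw [← List.append_assoc] at h3
      have h2 := List.append_cancel_right h3
      have hlast : s₁.getLast? = some b := by
        rw [← h2, List.getLast?_append_of_ne_nil _ (replicate_ne_nil' (by omega) b)]
        exact getLast?_replicate_pos (by omega) b
      rcases hs₁.2.2.2 with h | h
      · subst h; simp at hlast
      · rw [h] at hlast; simp at hlast
    · have hlt : j < i := by omega
      have h3 : s₁ ++ (List.replicate (i - j) b ++ List.replicate j b)
          = s₂ ++ List.replicate j b := by
        rw [← List.replicate_add, show i - j + j = i by omega]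
        exact heq'.symm
      rw [← List.append_assoc] at h3
      have h2 := List.append_cancel_right h3
      have hlast : s₂.getLast? = some b := by
        rw [← h2, List.getLast?_append_of_ne_nil _ (replicate_ne_nil' (by omega) b)]
        exact getLast?_replicate_pos (by omega) b
      rcases hs₂.2.2.2 with h | h
      · subst h; simp at hlast
      · rw [h] at hlast; simp at hlast

lemma card_length_eq (t : ℕ) : {s : List Bool | s.length = t}.ncard = 2 ^ t := by
  have h : {s : List Bool | s.length = t} = Set.range (List.ofFn : (Fin t → Bool) → List Bool) := by
    ext s
    simp only [Set.mem_setOf_eq, Set.mem_range]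
    constructor
    · intro h
      subst h
      exact ⟨s.get, List.ofFn_get s⟩
    · rintro ⟨f, rfl⟩
      simp
  rw [h, ← Set.image_univ, Set.ncard_image_of_injective _ List.ofFn_injective,
    Set.ncard_univ, Nat.card_eq_fintype_card]
  simp

lemma card_last {b : Bool} {t : ℕ} (ht : 1 ≤ t) :
    {s : List Bool | s.length = t ∧ s.getLast? = some b}.ncard = 2 ^ (t - 1) := by
  have h : {s : List Bool | s.length = t ∧ s.getLast? = some b}
      = (fun u => u ++ [b]) '' {u : List Bool | u.length = t - 1} := by
    ext s
    simp only [Set.mem_setOf_eq, Set.mem_image]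
    constructor
    · rintro ⟨hl, hlast⟩
      have hne : s ≠ [] := by intro h; subst h; simp at hl; omega
      refine ⟨s.dropLast, ?_, ?_⟩
      · simp [hl]
      · have h1 : s.getLast? = some (s.getLast hne) := List.getLast?_eq_getLast hne
        rw [h1] at hlast
        have h2 : s.getLast hne = b := by injection hlast
        rw [← h2]
        exact List.dropLast_concat_getLast hne
    · rintro ⟨u, hu, rfl⟩
      have hu' : u.length = t - 1 := hu
      refine ⟨?_, List.getLast?_concat⟩
      simp only [List.length_append, List.length_cons, List.length_nil]
      omega

  rw [h, Set.ncard_image_of_injective _ (fun x y hxy => List.append_cancel_right hxy),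
    card_length_eq]

lemma card_head_last {a b : Bool} {t : ℕ} (ht : 2 ≤ t) :
    {s : List Bool | s.length = t ∧ s.head? = some a ∧ s.getLast? = some b}.ncard
      = 2 ^ (t - 2) := by
  have h : {s : List Bool | s.length = t ∧ s.head? = some a ∧ s.getLast? = some b}
      = (fun u => a :: (u ++ [b])) '' {u : List Bool | u.length = t - 2} := by
    ext s
    simp only [Set.mem_setOf_eq, Set.mem_image]
    constructor
    · rintro ⟨hl, hh, hlast⟩
      cases s with
      | nil => simp at hh
      | cons x xs =>
        have hx : x = a := by
          simp only [List.head?_cons, Option.some_inj] at hh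
          exact hh
        have hxs : xs ≠ [] := by
          intro h; subst h; simp at hl; omega
        have hlast2 : xs.getLast? = some b := by
          rw [show x :: xs = [x] ++ xs by simp, List.getLast?_append_of_ne_nil _ hxs] at hlast
          exact hlast
        have h1 : xs.getLast? = some (xs.getLast hxs) := List.getLast?_eq_getLast hxs
        rw [h1] at hlast2
        have h2 : xs.getLast hxs = b := by injection hlast2
        refine ⟨xs.dropLast, ?_, ?_⟩
        · simp only [Set.mem_setOf_eq, List.length_dropLast]
          simp only [List.length_cons] at hl
          omega
        · rw [hx, ← h2]
          congr 1
          exact List.dropLast_concat_getLast hxs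
    · rintro ⟨u, hu, rfl⟩
      have hu' : u.length = t - 2 := hu
      refine ⟨by simp [hu']; omega, by simp, ?_⟩
      rw [show a :: (u ++ [b]) = (a :: u) ++ [b] by simp]
      exact List.getLast?_concat
  rw [h, Set.ncard_image_of_injective, card_length_eq]
  intro x y hxy
  simp only [List.cons.injEq] at hxy
  exact List.append_cancel_right hxy.2

lemma SS_none_eq_small {k n : ℕ} {b : Bool} (hn1 : 1 ≤ n) (hnk : n < k) :
    SS k n none b = {s : List Bool | s.length = n ∧ s.getLast? = some b} := by
  ext s
  simp only [SS, Set.mem_setOf_eq, Option.not_mem_none, false_implies, implies_true, true_and]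
  constructor
  · rintro ⟨hl, -, h⟩
    refine ⟨hl, h.resolve_left ?_⟩
    intro he; subst he; simp at hl; omega
  · rintro ⟨hl, h⟩
    exact ⟨hl, avoids_of_length_lt (by omega), Or.inr h⟩

lemma SS_some_eq {k n : ℕ} {a b : Bool} :
    SS k n (some a) b = {s : List Bool | s.length = n ∧ Avoids k s ∧
      s.head? = some a ∧ s.getLast? = some b} := by
  ext s
  simp only [SS, Set.mem_setOf_eq, Option.mem_def, Option.some_inj]
  constructor
  · rintro ⟨hl, hav, hh, hlast⟩
    have hh' : s.head? = some a := hh a rfl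
    refine ⟨hl, hav, hh', hlast.resolve_left ?_⟩
    intro he; subst he; simp at hh'
  · rintro ⟨hl, hav, hh, hlast⟩
    exact ⟨hl, hav, fun c hc => by rw [hh, hc], Or.inr hlast⟩

lemma SS_some_eq_small {k n : ℕ} {a b : Bool} (hnk : n < k) :
    SS k n (some a) b = {s : List Bool | s.length = n ∧
      s.head? = some a ∧ s.getLast? = some b} := by
  rw [SS_some_eq]
  ext s
  simp only [Set.mem_setOf_eq]
  constructor
  · rintro ⟨hl, _, hh, hlast⟩
    exact ⟨hl, hh, hlast⟩
  · rintro ⟨hl, hh, hlast⟩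
    exact ⟨hl, avoids_of_length_lt (by omega), hh, hlast⟩

lemma SS_map_not {k n : ℕ} {hd : Option Bool} {b : Bool} :
    SS k n (hd.map not) (!b) = (List.map not) '' SS k n hd b := by
  have key : ∀ (h : Option Bool) (c : Bool) (s : List Bool),
      s ∈ SS k n h c → s.map not ∈ SS k n (h.map not) (!c) := by
    rintro h c s ⟨hl, hav, hh, hlast⟩
    refine ⟨by simp [hl], avoids_map_not.2 hav, ?_, ?_⟩
    · intro a ha
      cases h with
      | none => simp at ha
      | some x =>
        have hx : a = !x := by
          simp only [Option.map_some, Option.mem_def, Option.some_inj] at ha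
          exact ha.symm
        have := hh x (by simp)
        rw [List.head?_map, this, hx]
        rfl
    · rcases hlast with rfl | hlast
      · left; rfl
      · right
        rw [List.getLast?_map, hlast]
        rfl
  ext s
  constructor
  · intro hs
    refine ⟨s.map not, ?_, ?_⟩
    · have h2 := key (hd.map not) (!b) s hs
      simp only [Bool.not_not] at h2
      have h3 : (hd.map not).map not = hd := by
        cases hd <;> simp
      rw [h3] at h2
      exact h2
    · rw [List.map_map]
      simp [Function.comp_def]
  · rintro ⟨u, hu, rfl⟩
    exact key hd b u hu

lemma card_SS_flip {k n : ℕ} {hd : Option Bool} {b : Bool} :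
    (SS k n (hd.map not) (!b)).ncard = (SS k n hd b).ncard := by
  rw [SS_map_not]
  apply Set.ncard_image_of_injective
  exact List.map_injective_iff.2 (fun x y h => by cases x <;> cases y <;> simp_all)

lemma SS_split_head {k n : ℕ} {b : Bool} (hn : 1 ≤ n) :
    SS k n none b = SS k n (some false) b ∪ SS k n (some true) b := by
  ext s
  rw [SS_some_eq, SS_some_eq]
  simp only [SS, Set.mem_setOf_eq, Set.mem_union, Option.not_mem_none, false_implies,
    implies_true, true_and]
  constructor
  · rintro ⟨hl, hav, hlast⟩
    have hne : s ≠ [] := by intro h; subst h; simp at hl; omega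
    have hlast' := hlast.resolve_left hne
    cases s with
    | nil => exact absurd rfl hne
    | cons x xs =>
      cases x
      · exact Or.inl ⟨hl, hav, by simp, hlast'⟩
      · exact Or.inr ⟨hl, hav, by simp, hlast'⟩
  · rintro (⟨hl, hav, _, hlast⟩ | ⟨hl, hav, _, hlast⟩) <;>
      exact ⟨hl, hav, Or.inr hlast⟩

lemma SS_split_head_card {k n : ℕ} {b : Bool} (hn : 1 ≤ n) :
    (SS k n none b).ncard = (SS k n (some false) b).ncard + (SS k n (some true) b).ncard := by
  rw [SS_split_head hn]
  apply Set.ncard_union_eq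
  · rw [Set.disjoint_left]
    rintro s hs1 hs2
    rw [SS_some_eq] at hs1 hs2
    have h1 := hs1.2.2.1
    have h2 := hs2.2.2.1
    rw [h1] at h2
    simp at h2
  · exact SS_finite
  · exact SS_finite

lemma genFib_lt {K n : ℕ} (h : n < K) : genFib K n = 2 ^ n := by
  rw [genFib, if_pos h]

lemma genFib_rec {K n : ℕ} (h : K ≤ n) :
    genFib K n = ∑ j ∈ Finset.Icc 1 K, genFib K (n - j) := by
  rw [genFib, if_neg (by omega)]
  exact Finset.sum_attach (Finset.Icc 1 K) (fun j => genFib K (n - j))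

lemma geom1 (K : ℕ) : ∑ j ∈ Finset.Icc 1 K, 2 ^ (K - j) = 2 ^ K - 1 := by
  induction K with
  | zero => simp
  | succ K ih =>
    rw [Finset.sum_Icc_succ_top (by omega)]
    have h2 : ∑ j ∈ Finset.Icc 1 K, 2 ^ (K + 1 - j) = 2 * ∑ j ∈ Finset.Icc 1 K, 2 ^ (K - j) := by
      rw [Finset.mul_sum]
      refine Finset.sum_congr rfl (fun j hj => ?_)
      have hj' := Finset.mem_Icc.1 hj
      rw [← pow_succ']
      congr 1
      omega
    rw [h2, ih]
    have h3 : 1 ≤ 2 ^ K := Nat.one_le_two_pow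
    have h5 : K + 1 - (K + 1) = 0 := by omega
    rw [h5, pow_zero, pow_succ]
    omega

lemma geom2 {K : ℕ} (hK : 1 ≤ K) :
    ∑ j ∈ Finset.Icc 1 K, 2 ^ (K - 1 - j) = 2 ^ (K - 1) := by
  obtain ⟨K', rfl⟩ : ∃ K', K = K' + 1 := ⟨K - 1, by omega⟩
  rw [Finset.sum_Icc_succ_top (by omega)]
  simp only [Nat.add_sub_cancel]
  rw [geom1 K']
  have h3 : 1 ≤ 2 ^ K' := Nat.one_le_two_pow
  have h4 : K' - (K' + 1) = 0 := by omega
  rw [h4, pow_zero]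
  omega

lemma dseq_period {k a : ℕ} : dseq k (a + k) = dseq k a := by
  unfold dseq
  rw [Nat.add_mod_right]

lemma dseq_window {k : ℕ} (hk : 2 ≤ k) :
    ∀ a, ∑ j ∈ Finset.range k, dseq k (a + j) = 0 := by
  intro a
  induction a with
  | zero =>
    have hcong : ∀ j ∈ Finset.range k, dseq k (0 + j)
        = (if j = 0 then (1 : ℤ) else 0) + (if j = 1 then (-1 : ℤ) else 0) := by
      intro j hj
      have hjk := Finset.mem_range.1 hj
      rw [Nat.zero_add]
      unfold dseq
      rw [Nat.mod_eq_of_lt hjk]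
      rcases Nat.eq_zero_or_pos j with rfl | hj0
      · simp
      · rcases Nat.lt_or_ge j 2 with hj2 | hj2
        · have : j = 1 := by omega
          subst this
          simp
        · simp only [if_neg (show ¬ j = 0 by omega), if_neg (show ¬ j = 1 by omega)]
          norm_num
    rw [Finset.sum_congr rfl hcong, Finset.sum_add_distrib,
      Finset.sum_ite_eq' (Finset.range k) 0 (fun _ => (1 : ℤ)),
      Finset.sum_ite_eq' (Finset.range k) 1 (fun _ => (-1 : ℤ))]
    rw [if_pos (Finset.mem_range.2 (by omega)), if_pos (Finset.mem_range.2 (by omega))]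
    ring
  | succ a ih =>
    have h1 : ∑ j ∈ Finset.range k, dseq k (a + 1 + j)
        = ∑ j ∈ Finset.range k, dseq k (a + (j + 1)) := by
      refine Finset.sum_congr rfl (fun j hj => ?_)
      congr 1
      omega
    have h2 := Finset.sum_range_succ' (fun j => dseq k (a + j)) k
    have h3 := Finset.sum_range_succ (fun j => dseq k (a + j)) k
    have h4 : dseq k (a + k) = dseq k a := dseq_period
    rw [ih] at h3
    simp only [Nat.add_zero] at h2
    rw [h1]
    linarith [h2, h3, h4]

lemma dseq_sum {k n : ℕ} (hk : 3 ≤ k) (hn : k ≤ n) :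
    ∑ j ∈ Finset.Icc 1 (k - 1), dseq k (n - j) = - dseq k n := by
  have hw := dseq_window (by omega : 2 ≤ k) (n - k)
  -- rewrite Icc sum into range sum
  have h1 : ∑ j ∈ Finset.Icc 1 (k - 1), dseq k (n - j)
      = ∑ i ∈ Finset.range (k - 1), dseq k (n - (1 + i)) := by
    rw [show Finset.Icc 1 (k - 1) = Finset.Ico 1 k by
      rw [← Finset.Ico_add_one_right_eq_Icc]; congr 1; omega]
    rw [Finset.sum_Ico_eq_sum_range]
  have h3 : ∑ i ∈ Finset.range (k - 1), dseq k (n - (1 + i))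
      = ∑ i ∈ Finset.range (k - 1), dseq k (n - k + (1 + i)) := by
    rw [← Finset.sum_range_reflect (fun i => dseq k (n - k + (1 + i))) (k - 1)]
    refine Finset.sum_congr rfl (fun j hj => ?_)
    have hjk := Finset.mem_range.1 hj
    congr 1
    omega
  have h4 := Finset.sum_range_succ' (fun j => dseq k (n - k + j)) (k - 1)
  rw [show k - 1 + 1 = k by omega] at h4
  rw [h4] at hw
  simp only [Nat.add_zero] at hw
  have h5 : dseq k (n - k) = dseq k n := by
    have hnk : n - k + k = n := by omega
    conv_rhs => rw [← hnk]
    exact dseq_period.symm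
  rw [h5] at hw
  have h6 : ∑ i ∈ Finset.range (k - 1), dseq k (n - k + (1 + i))
      = ∑ x ∈ Finset.range (k - 1), dseq k (n - k + (x + 1)) := by
    refine Finset.sum_congr rfl (fun j hj => ?_)
    congr 1
    omega
  rw [h1, h3, h6]
  linarith [hw]

lemma SS_none_card {k : ℕ} (hk : 3 ≤ k) :
    ∀ n b, (SS k n none b).ncard = genFib (k - 1) (n - 1) := by
  intro n
  induction n using Nat.strong_induction_on with
  | _ n ih =>
  intro b
  rcases Nat.eq_zero_or_pos n with rfl | hn0
  · have hset : SS k 0 none b = {([] : List Bool)} := by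
      ext s
      simp only [SS, Set.mem_setOf_eq, Set.mem_singleton_iff, List.length_eq_zero_iff]
      constructor
      · rintro ⟨h, -⟩; exact h
      · rintro rfl
        exact ⟨rfl, avoids_of_length_lt (by simp; omega), by simp, Or.inl rfl⟩
    rw [hset, Set.ncard_singleton, genFib_lt (by omega)]
    norm_num
  · rcases Nat.lt_or_ge n (k - 1) with hnk | hnk
    · -- 1 ≤ n ≤ k - 2
      rw [SS_none_eq_small hn0 (by omega), card_last hn0, genFib_lt (by omega)]
    · -- n ≥ k - 1
      rw [SS_card_rec hk (by omega) (by intro h; cases h)]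
      have hterm : ∀ j ∈ Finset.Icc 1 (k - 1),
          (SS k (n - j) none (!b)).ncard = genFib (k - 1) (n - j - 1) := by
        intro j hj
        have hj' := Finset.mem_Icc.1 hj
        exact ih (n - j) (by omega) (!b)
      rw [Finset.sum_congr rfl hterm]
      rcases Nat.lt_or_ge n k with hnk2 | hnk2
      · -- n = k - 1
        have hn : n = k - 1 := by omega
        subst hn
        have hterm2 : ∀ j ∈ Finset.Icc 1 (k - 1),
            genFib (k - 1) (k - 1 - j - 1) = 2 ^ (k - 1 - 1 - j) := by
          intro j hj
          have hj' := Finset.mem_Icc.1 hj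
          rw [genFib_lt (by omega)]
          congr 1
          omega
        rw [Finset.sum_congr rfl hterm2, geom2 (by omega), genFib_lt (by omega)]
      · -- n ≥ k
        rw [genFib_rec (show k - 1 ≤ n - 1 by omega)]
        refine Finset.sum_congr rfl (fun j hj => ?_)
        have hj' := Finset.mem_Icc.1 hj
        congr 1
        omega

lemma SS_empty_one {k : ℕ} (hk : 3 ≤ k) :
    SS k 1 (some false) true = (∅ : Set (List Bool)) := by
  rw [SS_some_eq_small (by omega)]
  ext s
  simp only [Set.mem_setOf_eq, Set.mem_empty_iff_false, iff_false]
  rintro ⟨hl, hh, hlast⟩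
  cases s with
  | nil => simp at hl
  | cons x xs =>
    cases xs with
    | nil =>
      simp only [List.head?_cons, Option.some_inj] at hh
      have : (x :: ([] : List Bool)).getLast? = some x := rfl
      rw [this] at hlast
      rw [hh] at hlast
      simp at hlast
    | cons y ys => simp at hl

lemma hD_eq {k : ℕ} (hk : 3 ≤ k) {t : ℕ} (ht : 1 ≤ t) :
    ((SS k t (some false) false).ncard : ℤ)
      = (genFib (k - 1) (t - 1) : ℤ) - (SS k t (some false) true).ncard := by
  have hsplit := SS_split_head_card (k := k) (b := false) ht
  have hflip : (SS k t (some false) true).ncard = (SS k t (some true) false).ncard := by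
    have h := card_SS_flip (k := k) (n := t) (hd := some true) (b := false)
    simpa using h
  have hA := SS_none_card hk t false
  rw [hA] at hsplit
  rw [hflip]
  omega

lemma two_bCard {k : ℕ} (hk : 3 ≤ k) :
    ∀ n, 1 ≤ n → 2 * ((SS k n (some false) true).ncard : ℤ)
      = (genFib (k - 1) (n - 1) : ℤ) + dseq k n := by
  intro n
  induction n using Nat.strong_induction_on with
  | _ n ih =>
  intro hn1
  rcases Nat.lt_or_ge n 2 with hn2 | hn2
  · -- n = 1
    have : n = 1 := by omega
    subst this
    rw [SS_empty_one hk, Set.ncard_empty, genFib_lt (by omega)]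
    have hd1 : dseq k 1 = -1 := by
      unfold dseq
      rw [Nat.mod_eq_of_lt (by omega), if_neg (by omega), if_pos rfl]
    rw [hd1]
    norm_num
  · rcases Nat.lt_or_ge n k with hnk | hnk
    · -- 2 ≤ n ≤ k - 1
      rw [SS_some_eq_small (by omega), card_head_last hn2, genFib_lt (by omega)]
      have hd0 : dseq k n = 0 := by
        unfold dseq
        rw [Nat.mod_eq_of_lt (by omega), if_neg (by omega), if_neg (by omega)]
      rw [hd0]
      have : (n - 1) = (n - 2) + 1 := by omega
      rw [this, pow_succ]
      push_cast
      ring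
    · -- n ≥ k
      have hrec := SS_card_rec (k := k) (n := n) (hd := some false) (b := true) hk
        (by omega) (by intro h; simp at h)
      simp only [Bool.not_true] at hrec
      have hcast : 2 * ((SS k n (some false) true).ncard : ℤ)
          = ∑ j ∈ Finset.Icc 1 (k - 1), 2 * ((SS k (n - j) (some false) false).ncard : ℤ) := by
        rw [hrec]
        push_cast
        rw [Finset.mul_sum]
      have hterm : ∀ j ∈ Finset.Icc 1 (k - 1),
          2 * ((SS k (n - j) (some false) false).ncard : ℤ)
            = (genFib (k - 1) (n - 1 - j) : ℤ) - dseq k (n - j) := by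
        intro j hj
        have hj' := Finset.mem_Icc.1 hj
        rw [hD_eq hk (by omega : 1 ≤ n - j), show n - j - 1 = n - 1 - j by omega]
        have hih := ih (n - j) (by omega) (by omega)
        rw [show n - j - 1 = n - 1 - j by omega] at hih
        linarith
      rw [hcast, Finset.sum_congr rfl hterm, Finset.sum_sub_distrib,
        dseq_sum hk (by omega)]
      have hgf : ((genFib (k - 1) (n - 1) : ℕ) : ℤ)
          = ∑ j ∈ Finset.Icc 1 (k - 1), ((genFib (k - 1) (n - 1 - j) : ℕ) : ℤ) := by
        rw [genFib_rec (show k - 1 ≤ n - 1 by omega)]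
        push_cast
        rfl
      rw [← hgf]
      ring

lemma SS_none_eq {k n : ℕ} {b : Bool} (hn : 1 ≤ n) :
    SS k n none b = {s : List Bool | s.length = n ∧ Avoids k s ∧ s.getLast? = some b} := by
  ext s
  simp only [SS, Set.mem_setOf_eq, Option.not_mem_none, false_implies, implies_true, true_and]
  constructor
  · rintro ⟨hl, hav, hlast⟩
    refine ⟨hl, hav, hlast.resolve_left ?_⟩
    intro he; subst he; simp at hl; omega
  · rintro ⟨hl, hav, hlast⟩
    exact ⟨hl, hav, Or.inr hlast⟩

lemma card_transfer (n : ℕ) (P : List Bool → Prop) :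
    {f : Fin n → Bool | P (List.ofFn f)}.ncard = {s : List Bool | s.length = n ∧ P s}.ncard := by
  have h : {s : List Bool | s.length = n ∧ P s}
      = List.ofFn '' {f : Fin n → Bool | P (List.ofFn f)} := by
    ext s
    simp only [Set.mem_setOf_eq, Set.mem_image]
    constructor
    · rintro ⟨hl, hp⟩
      subst hl
      exact ⟨s.get, by rwa [List.ofFn_get], List.ofFn_get s⟩
    · rintro ⟨f, hf, rfl⟩
      exact ⟨by simp, hf⟩
  rw [h, Set.ncard_image_of_injective _ List.ofFn_injective]

lemma ncard_univ_pi {m : ℕ} {β : Type*} (C : Fin m → Set β) :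
    (Set.univ.pi C).ncard = ∏ i, (C i).ncard := by
  rw [← Nat.card_coe_set_eq, Nat.card_congr (Equiv.Set.univPi C), Nat.card_pi]
  exact Finset.prod_congr rfl (fun i _ => Nat.card_coe_set_eq (C i))

lemma prod_ite_range {m : ℕ} (hm : 2 ≤ m) (a b c : ℕ) :
    (∏ i ∈ Finset.range m, (if i = 0 then a else if i = m - 1 then c else b))
      = a * c * b ^ (m - 2) := by
  have hset : Finset.range m = insert 0 (insert (m - 1) (Finset.Ioo 0 (m - 1))) := by
    ext x
    simp only [Finset.mem_range, Finset.mem_insert, Finset.mem_Ioo]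
    omega
  rw [hset, Finset.prod_insert (by simp only [Finset.mem_insert, Finset.mem_Ioo]; omega),
    Finset.prod_insert (by simp only [Finset.mem_Ioo]; omega)]
  rw [if_pos rfl, if_neg (by omega), if_pos rfl]
  have hcongr : ∀ i ∈ Finset.Ioo 0 (m - 1),
      (if i = 0 then a else if i = m - 1 then c else b) = b := by
    intro i hi
    have := Finset.mem_Ioo.1 hi
    rw [if_neg (by omega), if_neg (by omega)]
  rw [Finset.prod_congr rfl hcongr, Finset.prod_const, Nat.card_Ioo]
  have he : m - 1 - 0 - 1 = m - 2 := by omega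
  rw [he]
  ring

lemma SkSet_card {m n k : ℕ} (hm : 2 ≤ m) (hk : 3 ≤ k) (hn : 2 * k ≤ n) :
    (SkSet m n k).ncard =
      (SS k (n - 2*k + 2) (some false) true).ncard
        * {v : List Bool | v.length = n - 2*k ∧ Avoids k v}.ncard
        * (SS k n none false).ncard ^ (m - 2) := by
  classical
  set R1 : Set (Fin n → Bool) := {f | ∃ v : List Bool, v.length = n - 2*k + 2 ∧ Avoids k v ∧
      v.head? = some false ∧ v.getLast? = some true ∧
      List.ofFn f = List.replicate (k-1) true ++ v ++ List.replicate (k-1) false} with hR1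
  set R2 : Set (Fin n → Bool) :=
    {f | Avoids k (List.ofFn f) ∧ (List.ofFn f).getLast? = some false} with hR2
  set R3 : Set (Fin n → Bool) := {f | ∃ v : List Bool, v.length = n - 2*k ∧ Avoids k v ∧
      List.ofFn f = List.replicate k true ++ v ++ List.replicate k false} with hR3
  set C : ℕ → Set (Fin n → Bool) := fun i =>
    if i = 0 then R1 else if i = m - 1 then R3 else R2 with hC
  have hrow : ∀ (A : Fin m → Fin n → Bool) (i : ℕ) (h : i < m),
      row A i = List.ofFn (A ⟨i, h⟩) := by
    intro A i h
    unfold row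
    congr 1
    funext j
    rw [dif_pos h]
  have hset : SkSet m n k = Set.univ.pi (fun i : Fin m => C (i : ℕ)) := by
    ext A
    rw [Set.mem_univ_pi]
    constructor
    · rintro ⟨h1, h2, h3⟩ i
      by_cases hi0 : (i : ℕ) = 0
      · have : C (i : ℕ) = R1 := by rw [hC]; simp only [if_pos hi0]
        rw [this]
        obtain ⟨v, hv1, hv2, hv3, hv4, hv5⟩ := h1
        refine ⟨v, hv1, hv2, hv3, hv4, ?_⟩
        rw [← hrow A i i.isLt]
        rw [hi0]
        exact hv5
      · by_cases him : (i : ℕ) = m - 1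
        · have : C (i : ℕ) = R3 := by rw [hC]; simp only [if_neg hi0, if_pos him]
          rw [this]
          obtain ⟨v, hv1, hv2, hv3⟩ := h3
          refine ⟨v, hv1, hv2, ?_⟩
          rw [← hrow A i i.isLt, him]
          exact hv3
        · have : C (i : ℕ) = R2 := by rw [hC]; simp only [if_neg hi0, if_neg him]
          rw [this]
          have hi2 := i.isLt
          have hmid := h2 i (by omega) (by omega)
          refine ⟨?_, ?_⟩
          · rw [← hrow A i i.isLt]; exact hmid.1
          · rw [← hrow A i i.isLt]; exact hmid.2
    · intro h
      refine ⟨?_, ?_, ?_⟩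
      · have h0 : A ⟨0, by omega⟩ ∈ C 0 := h ⟨0, by omega⟩
        rw [hC] at h0
        simp only [if_pos rfl] at h0
        obtain ⟨v, hv1, hv2, hv3, hv4, hv5⟩ := h0
        refine ⟨v, hv1, hv2, hv3, hv4, ?_⟩
        rw [hrow A 0 (by omega)]
        exact hv5
      · intro i h1i h2i
        have hi : i < m := by omega
        have hmem : A ⟨i, hi⟩ ∈ C i := h ⟨i, hi⟩
        rw [hC] at hmem
        simp only [if_neg (by omega : ¬ i = 0), if_neg (by omega : ¬ i = m - 1)] at hmem
        rw [hrow A i hi]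
        exact hmem
      · have hm1 : m - 1 < m := by omega
        have hmem : A ⟨m - 1, hm1⟩ ∈ C (m - 1) := h ⟨m - 1, hm1⟩
        rw [hC] at hmem
        simp only [if_neg (by omega : ¬ m - 1 = 0), if_pos rfl] at hmem
        obtain ⟨v, hv1, hv2, hv3⟩ := hmem
        refine ⟨v, hv1, hv2, ?_⟩
        rw [hrow A (m-1) hm1]
        exact hv3
  rw [hset, ncard_univ_pi]
  have hprod : (∏ i : Fin m, (C (i : ℕ)).ncard)
      = ∏ i ∈ Finset.range m, (C i).ncard :=
    Fin.prod_univ_eq_prod_range (fun i => (C i).ncard) m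
  rw [hprod]
  have hcong : ∀ i ∈ Finset.range m, (C i).ncard
      = (if i = 0 then R1.ncard else if i = m - 1 then R3.ncard else R2.ncard) := by
    intro i _
    simp only [hC]
    split_ifs <;> rfl
  rw [Finset.prod_congr rfl hcong, prod_ite_range hm]
  -- now compute the three cardinalities
  have hR1card : R1.ncard = (SS k (n - 2*k + 2) (some false) true).ncard := by
    rw [hR1]
    rw [card_transfer n (fun s => ∃ v : List Bool, v.length = n - 2*k + 2 ∧ Avoids k v ∧
      v.head? = some false ∧ v.getLast? = some true ∧
      s = List.replicate (k-1) true ++ v ++ List.replicate (k-1) false)]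
    have himg : {s : List Bool | s.length = n ∧ ∃ v : List Bool, v.length = n - 2*k + 2 ∧
        Avoids k v ∧ v.head? = some false ∧ v.getLast? = some true ∧
        s = List.replicate (k-1) true ++ v ++ List.replicate (k-1) false}
        = (fun v => List.replicate (k-1) true ++ v ++ List.replicate (k-1) false) ''
            (SS k (n - 2*k + 2) (some false) true) := by
      ext s
      simp only [Set.mem_setOf_eq, Set.mem_image, SS_some_eq]
      constructor
      · rintro ⟨hl, v, hv1, hv2, hv3, hv4, rfl⟩
        exact ⟨v, ⟨hv1, hv2, hv3, hv4⟩, rfl⟩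
      · rintro ⟨v, ⟨hv1, hv2, hv3, hv4⟩, rfl⟩
        refine ⟨?_, v, hv1, hv2, hv3, hv4, rfl⟩
        simp only [List.length_append, List.length_replicate]
        omega
    rw [himg, Set.ncard_image_of_injective]
    intro x y hxy
    simp only at hxy
    have h1 := List.append_cancel_right hxy
    exact List.append_cancel_left h1
  have hR3card : R3.ncard = {v : List Bool | v.length = n - 2*k ∧ Avoids k v}.ncard := by
    rw [hR3]
    rw [card_transfer n (fun s => ∃ v : List Bool, v.length = n - 2*k ∧ Avoids k v ∧
      s = List.replicate k true ++ v ++ List.replicate k false)]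
    have himg : {s : List Bool | s.length = n ∧ ∃ v : List Bool, v.length = n - 2*k ∧
        Avoids k v ∧ s = List.replicate k true ++ v ++ List.replicate k false}
        = (fun v => List.replicate k true ++ v ++ List.replicate k false) ''
            {v : List Bool | v.length = n - 2*k ∧ Avoids k v} := by
      ext s
      simp only [Set.mem_setOf_eq, Set.mem_image]
      constructor
      · rintro ⟨hl, v, hv1, hv2, rfl⟩
        exact ⟨v, ⟨hv1, hv2⟩, rfl⟩
      · rintro ⟨v, ⟨hv1, hv2⟩, rfl⟩
        refine ⟨?_, v, hv1, hv2, rfl⟩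
        simp only [List.length_append, List.length_replicate]
        omega
    rw [himg, Set.ncard_image_of_injective]
    intro x y hxy
    simp only at hxy
    have h1 := List.append_cancel_right hxy
    exact List.append_cancel_left h1
  have hR2card : R2.ncard = (SS k n none false).ncard := by
    rw [hR2]
    rw [card_transfer n (fun s => Avoids k s ∧ s.getLast? = some false)]
    rw [SS_none_eq (by omega)]
  rw [hR1card, hR2card, hR3card]

lemma SS_two {k : ℕ} (hk : 3 ≤ k) :
    SS k 2 (some false) true = {[false, true]} := by
  rw [SS_some_eq_small (by omega)]
  ext s
  simp only [Set.mem_setOf_eq, Set.mem_singleton_iff]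
  constructor
  · rintro ⟨hl, hh, hlast⟩
    match s, hl with
    | [x, y], _ =>
      simp only [List.head?_cons, Option.some_inj] at hh
      have hy : ([x, y] : List Bool).getLast? = some y := rfl
      rw [hy] at hlast
      have : y = true := by injection hlast
      rw [hh, this]
  · rintro rfl
    exact ⟨rfl, rfl, rfl⟩

lemma V3_card_zero {k : ℕ} (hk : 3 ≤ k) :
    {v : List Bool | v.length = 0 ∧ Avoids k v}.ncard = 1 := by
  have h : {v : List Bool | v.length = 0 ∧ Avoids k v} = {([] : List Bool)} := by
    ext s
    simp only [Set.mem_setOf_eq, Set.mem_singleton_iff, List.length_eq_zero_iff]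
    constructor
    · rintro ⟨h, -⟩; exact h
    · rintro rfl; exact ⟨rfl, avoids_of_length_lt (by simp; omega)⟩
  rw [h, Set.ncard_singleton]

lemma V3_card_pos {k L : ℕ} (hk : 3 ≤ k) (hL : 1 ≤ L) :
    {v : List Bool | v.length = L ∧ Avoids k v}.ncard = 2 * genFib (k - 1) (L - 1) := by
  have h : {v : List Bool | v.length = L ∧ Avoids k v}
      = SS k L none false ∪ SS k L none true := by
    ext s
    simp only [Set.mem_setOf_eq, Set.mem_union, SS]
    constructor
    · rintro ⟨hl, hav⟩
      have hne : s ≠ [] := by intro he; subst he; simp at hl; omega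
      cases hgl : s.getLast? with
      | none =>
        rw [List.getLast?_eq_none_iff] at hgl
        exact absurd hgl hne
      | some c =>
        cases c
        · exact Or.inl ⟨hl, hav, by simp, Or.inr rfl⟩
        · exact Or.inr ⟨hl, hav, by simp, Or.inr rfl⟩
    · rintro (⟨hl, hav, -, -⟩ | ⟨hl, hav, -, -⟩) <;> exact ⟨hl, hav⟩
  rw [h, Set.ncard_union_eq ?dis SS_finite SS_finite]
  · rw [SS_none_card hk L false, SS_none_card hk L true]
    ring
  case dis =>
    rw [Set.disjoint_left]
    rintro s ⟨hl, -, -, h1⟩ ⟨-, -, -, h2⟩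
    have hne : s ≠ [] := by intro he; subst he; simp at hl; omega
    have h1' := h1.resolve_left hne
    have h2' := h2.resolve_left hne
    rw [h1'] at h2'
    simp at h2'

end SkP

/-- The cardinality of `S^(k)_{m×n}` in terms of `(k−1)`-generalized Fibonacci
numbers and the sequence `d^(k)`. -/
theorem SkSet_ncard_genFib (m n k : ℕ) (hm : 2 ≤ m) (hk : 3 ≤ k)
    (hkn : k ≤ n / 2) (hn : 2 * k ≤ n) :
    (n = 2 * k → ((SkSet m n k).ncard : ℤ) = (genFib (k - 1) (2*k - 1) : ℤ) ^ (m - 2)) ∧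
    (2 * k < n → ((SkSet m n k).ncard : ℤ) =
      (genFib (k - 1) (n - 2*k - 1) : ℤ) *
        ((genFib (k - 1) (n - 2*k + 1) : ℤ) + dseq k (n - 2*k + 2)) *
        (genFib (k - 1) (n - 1) : ℤ) ^ (m - 2)) := by
  constructor
  · intro h2k
    rw [SkP.SkSet_card hm hk hn]
    have e1 : n - 2*k = 0 := by omega
    have e2 : n - 2*k + 2 = 2 := by omega
    rw [e2, e1, SkP.SS_two hk, Set.ncard_singleton, SkP.V3_card_zero hk,
      SkP.SS_none_card hk n false]
    have e3 : n - 1 = 2*k - 1 := by omega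
    rw [e3]
    push_cast
    ring
  · intro h2k
    rw [SkP.SkSet_card hm hk hn]
    have hL : 1 ≤ n - 2*k := by omega
    rw [SkP.V3_card_pos hk hL, SkP.SS_none_card hk n false]
    have hB := SkP.two_bCard hk (n - 2*k + 2) (by omega)
    rw [show n - 2*k + 2 - 1 = n - 2*k + 1 by omega] at hB
    push_cast
    linear_combination ((genFib (k - 1) (n - 2*k - 1) : ℤ) *
      (genFib (k - 1) (n - 1) : ℤ) ^ (m - 2)) * hB
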